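/- Let (a_k)_{k≥1} be complex numbers with Σ_{k=1}^∞ |a_k| < ∞, and let (c_k)_{k≥0} be defined from (a_k) by the MA recursion. Then Σ_{k=0}^∞ |c_k| ≤ exp( Σ_{k=1}^∞ |a_k| ). -/

import Mathlib

open Filter Topology


noncomputable def maDom (α : ℕ → ℝ) : ℕ → ℝ
  | 0 => 1
  | (k+1) => ∑ j ∈ (Finset.range (k+1)).attach,
      (((k+1-(j:ℕ) : ℕ) : ℝ) / ((k+1 : ℕ) : ℝ)) * α (k+1-(j:ℕ)) * maDom α j
  decreasing_by exact Finset.mem_range.mp j.2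

lemma maDom_zero (α : ℕ → ℝ) : maDom α 0 = 1 := by rw [maDom]

lemma maDom_succ (α : ℕ → ℝ) (k : ℕ) : maDom α (k+1) =
    ∑ j ∈ Finset.range (k+1),
      (((k+1-j : ℕ) : ℝ) / ((k+1 : ℕ) : ℝ)) * α (k+1-j) * maDom α j := by
  conv_lhs => rw [maDom]
  exact Finset.sum_attach (Finset.range (k+1))
    (fun j => (((k+1-j : ℕ) : ℝ) / ((k+1 : ℕ) : ℝ)) * α (k+1-j) * maDom α j)

lemma maDom_nonneg (α : ℕ → ℝ) (hα : ∀ m, 0 ≤ α m) : ∀ k, 0 ≤ maDom α k := by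
  intro k
  induction k using Nat.strong_induction_on with
  | _ k ih =>
    match k with
    | 0 => rw [maDom_zero]; norm_num
    | (k+1) =>
      rw [maDom_succ]
      apply Finset.sum_nonneg
      intro j hj
      have hj' := Finset.mem_range.mp hj
      have := ih j (by omega)
      exact mul_nonneg (mul_nonneg (by positivity) (hα _)) this

lemma maDom_succ_mul (α : ℕ → ℝ) (k : ℕ) :
    ((k:ℝ)+1) * maDom α (k+1) =
      ∑ j ∈ Finset.range (k+1), ((k+1-j : ℕ) : ℝ) * α (k+1-j) * maDom α j := by
  rw [maDom_succ, Finset.mul_sum]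
  refine Finset.sum_congr rfl fun j hj => ?_
  have h1 : ((k+1 : ℕ) : ℝ) ≠ 0 := by positivity
  push_cast at h1 ⊢
  field_simp

lemma sum_maDom_le (α : ℕ → ℝ) (hα : ∀ m, 0 ≤ α m) (N : ℕ) :
    ∑ k ∈ Finset.range (N+1), maDom α k ≤ Real.exp (∑ i ∈ Finset.range N, α (i+1)) := by
  set d := maDom α with hd
  have hdnn : ∀ k, 0 ≤ d k := maDom_nonneg α hα
  -- key derivative inequality
  have key : ∀ t : ℝ, 0 ≤ t →
      (∑ k ∈ Finset.range (N+1), d k * ((k:ℝ) * t^(k-1))) ≤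
      (∑ i ∈ Finset.range N, α (i+1) * (((i:ℝ)+1) * t^i)) *
        (∑ k ∈ Finset.range (N+1), d k * t^k) := by
    intro t ht
    have hP'eq : (∑ k ∈ Finset.range (N+1), d k * ((k:ℝ) * t^(k-1))) =
        ∑ x ∈ (Finset.range N).sigma (fun k => Finset.range (k+1)),
          ((x.1+1-x.2 : ℕ) : ℝ) * α (x.1+1-x.2) * d x.2 * t^x.1 := by
      rw [Finset.sum_range_succ']
      simp only [Nat.cast_zero, zero_mul, mul_zero, add_zero, Nat.add_sub_cancel]
      rw [← Finset.sum_sigma' (Finset.range N) (fun k => Finset.range (k+1))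
        (fun k j => ((k+1-j : ℕ) : ℝ) * α (k+1-j) * d j * t^k)]
      refine Finset.sum_congr rfl fun k _ => ?_
      calc d (k+1) * (((k+1 : ℕ):ℝ) * t^k)
          = (((k:ℝ)+1) * d (k+1)) * t^k := by push_cast; ring
        _ = (∑ j ∈ Finset.range (k+1), ((k+1-j : ℕ) : ℝ) * α (k+1-j) * d j) * t^k := by
            rw [maDom_succ_mul α k]
        _ = ∑ j ∈ Finset.range (k+1), ((k+1-j : ℕ) : ℝ) * α (k+1-j) * d j * t^k := by
            rw [Finset.sum_mul]
    have hQP : (∑ i ∈ Finset.range N, α (i+1) * (((i:ℝ)+1) * t^i)) *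
        (∑ k ∈ Finset.range (N+1), d k * t^k) =
        ∑ p ∈ Finset.range N ×ˢ Finset.range (N+1),
          ((p.1+1 : ℕ) : ℝ) * α (p.1+1) * d p.2 * t^(p.1+p.2) := by
      rw [Finset.sum_mul_sum, ← Finset.sum_product']
      refine Finset.sum_congr rfl fun p _ => ?_
      push_cast
      rw [pow_add]
      ring
    rw [hP'eq, hQP]
    have hbij : ∑ x ∈ (Finset.range N).sigma (fun k => Finset.range (k+1)),
        ((x.1+1-x.2 : ℕ) : ℝ) * α (x.1+1-x.2) * d x.2 * t^x.1 =
        ∑ p ∈ (Finset.range N ×ˢ Finset.range (N+1)).filter (fun p => p.1 + p.2 < N),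
          ((p.1+1 : ℕ) : ℝ) * α (p.1+1) * d p.2 * t^(p.1+p.2) := by
      refine Finset.sum_nbij' (fun x => (x.1 - x.2, x.2)) (fun p => ⟨p.1 + p.2, p.2⟩)
        ?_ ?_ ?_ ?_ ?_
      · rintro ⟨k, j⟩ hx
        simp only [Finset.mem_sigma, Finset.mem_range] at hx
        simp only [Finset.mem_filter, Finset.mem_product, Finset.mem_range]
        omega
      · rintro ⟨k, j⟩ hp
        simp only [Finset.mem_filter, Finset.mem_product, Finset.mem_range] at hp
        simp only [Finset.mem_sigma, Finset.mem_range]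
        omega
      · rintro ⟨k, j⟩ hx
        simp only [Finset.mem_sigma, Finset.mem_range] at hx
        simp only
        congr 1
        omega
      · rintro ⟨k, j⟩ hp
        simp only [Finset.mem_filter, Finset.mem_product, Finset.mem_range] at hp
        simp only [Nat.add_sub_cancel]
      · rintro ⟨k, j⟩ hx
        simp only [Finset.mem_sigma, Finset.mem_range] at hx
        simp only
        have h1 : k + 1 - j = k - j + 1 := by omega
        have h2 : k - j + j = k := by omega
        rw [h1, h2]
    rw [hbij]
    refine Finset.sum_le_sum_of_subset_of_nonneg (Finset.filter_subset _ _) ?_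
    intro p _ _
    have := hdnn p.2
    have := hα (p.1+1)
    positivity
  set P : ℝ → ℝ := fun t => ∑ k ∈ Finset.range (N+1), d k * t^k with hP
  set Q : ℝ → ℝ := fun t => ∑ i ∈ Finset.range N, α (i+1) * t^(i+1) with hQ
  set h : ℝ → ℝ := fun t => P t * Real.exp (-(Q t)) with hh
  have hhd : ∀ t : ℝ, HasDerivAt h
      (((∑ k ∈ Finset.range (N+1), d k * ((k:ℝ) * t^(k-1))) -
        (∑ i ∈ Finset.range N, α (i+1) * (((i:ℝ)+1) * t^i)) * P t) * Real.exp (-(Q t))) t := by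
    intro t
    have hPd : HasDerivAt P (∑ k ∈ Finset.range (N+1), d k * ((k:ℝ) * t^(k-1))) t :=
      HasDerivAt.fun_sum fun k _ => (hasDerivAt_pow k t).const_mul (d k)
    have hQd : HasDerivAt Q (∑ i ∈ Finset.range N, α (i+1) * (((i:ℝ)+1) * t^i)) t := by
      apply HasDerivAt.fun_sum
      intro i _
      have := (hasDerivAt_pow (i+1) t).const_mul (α (i+1))
      simpa using this
    have := hPd.fun_mul (hQd.fun_neg.exp)
    refine this.congr_deriv ?_
    ring
  have hdiff : Differentiable ℝ h := fun t => (hhd t).differentiableAt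
  have hanti : AntitoneOn h (Set.Icc 0 1) := by
    apply antitoneOn_of_deriv_nonpos (convex_Icc 0 1) hdiff.continuous.continuousOn
      hdiff.differentiableOn
    intro x hx
    rw [interior_Icc, Set.mem_Ioo] at hx
    rw [(hhd x).deriv]
    have h1 := key x hx.1.le
    have h2 : (0:ℝ) < Real.exp (-(Q x)) := Real.exp_pos _
    nlinarith
  have h10 : h 1 ≤ h 0 :=
    hanti (Set.left_mem_Icc.mpr zero_le_one) (Set.right_mem_Icc.mpr zero_le_one) zero_le_one
  have hP0 : P 0 = 1 := by
    rw [hP]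
    simp only
    rw [Finset.sum_eq_single 0]
    · simp [hd, maDom_zero]
    · intro k _ hk
      rw [zero_pow hk, mul_zero]
    · intro habs
      exact absurd (Finset.mem_range.mpr (Nat.succ_pos N)) habs
  have hQ0 : Q 0 = 0 := by
    rw [hQ]
    simp only
    refine Finset.sum_eq_zero fun i _ => ?_
    rw [zero_pow (Nat.succ_ne_zero i), mul_zero]
  have hh0 : h 0 = 1 := by rw [hh]; simp only; rw [hP0, hQ0]; simp
  have hP1 : P 1 = ∑ k ∈ Finset.range (N+1), d k := by
    rw [hP]; simp
  have hQ1 : Q 1 = ∑ i ∈ Finset.range N, α (i+1) := by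
    rw [hQ]; simp
  rw [hh0] at h10
  have hmul : Real.exp (-(Q 1)) * Real.exp (Q 1) = 1 := by
    rw [← Real.exp_add]; simp
  have hepos : (0:ℝ) < Real.exp (Q 1) := Real.exp_pos _
  have hfin : P 1 ≤ Real.exp (Q 1) := by
    have := mul_le_mul_of_nonneg_right h10 hepos.le
    rw [hh] at this
    simp only at this
    nlinarith
  rw [hP1, hQ1] at hfin
  exact hfin

/-- The MA recursion: `c 0 = 1` and
`c (k+1) = ∑_{j=0}^{k} (1 - j/(k+1)) * a (k+1-j) * c j`. -/
def IsMARec (a c : ℕ → ℂ) : Prop :=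
  c 0 = 1 ∧
    ∀ k : ℕ, c (k + 1) =
      ∑ j ∈ Finset.range (k + 1), (1 - (j : ℂ) / ((k : ℂ) + 1)) * a (k + 1 - j) * c j

lemma norm_le_maDom (a c : ℕ → ℂ) (hrec : IsMARec a c) :
    ∀ k, ‖c k‖ ≤ maDom (fun m => ‖a m‖) k := by
  intro k
  induction k using Nat.strong_induction_on with
  | _ k ih =>
    match k with
    | 0 => rw [maDom_zero, hrec.1, norm_one]
    | (k+1) =>
      rw [hrec.2 k, maDom_succ]
      refine (norm_sum_le _ _).trans (Finset.sum_le_sum fun j hj => ?_)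
      have hjk : j < k + 1 := Finset.mem_range.mp hj
      have hk0 : ((k:ℂ)+1) ≠ 0 := Nat.cast_add_one_ne_zero k
      have hcast : (1 - (j:ℂ)/((k:ℂ)+1)) =
          (((((k+1-j : ℕ) : ℝ)/((k+1 : ℕ) : ℝ)) : ℝ) : ℂ) := by
        have hle : j ≤ k + 1 := by omega
        push_cast [Nat.cast_sub hle]
        field_simp
      have hnorm : ‖(((((k+1-j : ℕ) : ℝ)/((k+1 : ℕ) : ℝ)) : ℝ) : ℂ)‖ =
          (((k+1-j : ℕ) : ℝ)/((k+1 : ℕ) : ℝ)) := by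
        rw [Complex.norm_real]
        exact abs_of_nonneg (by positivity)
      rw [norm_mul, norm_mul, hcast, hnorm]
      have h1 := ih j (by omega)
      have h2 := maDom_nonneg (fun m => ‖a m‖) (fun m => norm_nonneg _) j
      gcongr

/-- If `∑_{k=1}^∞ |a_k| < ∞` and `(c_k)` is obtained from `(a_k)` by the MA recursion, then
`∑_{k=0}^∞ |c_k| ≤ exp (∑_{k=1}^∞ |a_k|)`. -/
theorem statement12 (a c : ℕ → ℂ)
    (ha : Summable fun k : ℕ => ‖a (k + 1)‖)
    (hrec : IsMARec a c) :
    ∑' k : ℕ, ENNReal.ofReal ‖c k‖ ≤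
      ENNReal.ofReal (Real.exp (∑' k : ℕ, ‖a (k + 1)‖)) := by
  have hdom := norm_le_maDom a c hrec
  rw [ENNReal.tsum_eq_iSup_sum]
  refine iSup_le fun s => ?_
  set N := s.sup id with hN
  have hsub : s ⊆ Finset.range (N+1) := fun i hi =>
    Finset.mem_range.mpr (Nat.lt_succ_of_le (Finset.le_sup (f := id) hi))
  calc ∑ k ∈ s, ENNReal.ofReal ‖c k‖
      ≤ ∑ k ∈ Finset.range (N+1), ENNReal.ofReal ‖c k‖ :=
        Finset.sum_le_sum_of_subset hsub
    _ = ENNReal.ofReal (∑ k ∈ Finset.range (N+1), ‖c k‖) :=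
        (ENNReal.ofReal_sum_of_nonneg (fun i _ => norm_nonneg _)).symm
    _ ≤ ENNReal.ofReal (Real.exp (∑' k : ℕ, ‖a (k + 1)‖)) := by
        apply ENNReal.ofReal_le_ofReal
        calc ∑ k ∈ Finset.range (N+1), ‖c k‖
            ≤ ∑ k ∈ Finset.range (N+1), maDom (fun m => ‖a m‖) k :=
              Finset.sum_le_sum fun k _ => hdom k
          _ ≤ Real.exp (∑ i ∈ Finset.range N, ‖a (i+1)‖) :=
              sum_maDom_le _ (fun m => norm_nonneg _) N
          _ ≤ Real.exp (∑' k : ℕ, ‖a (k + 1)‖) := Real.exp_le_exp.mpr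
              (Summable.sum_le_tsum _ (fun i _ => norm_nonneg _) ha)
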